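/- Let $p \in (0,1)$ and $\alpha > 1$ be constants, and let $G \sim \mathcal{G}(n,p)$. There exists a constant $\beta = \beta(p,\alpha)$ such that with probability tending to 1 as $n \to \infty$, every pair of vertex subsets $X, Y \subseteq [n]$ with $|X|, |Y| > \beta \log n$ satisfies $\mathrm{bden}_G(X,Y) \leq \alpha p$. -/

import Mathlib

open MeasureTheory ProbabilityTheory Real Filter


lemma pair_sum_eq {n : ℕ} (f : Fin n × Fin n → ℝ)
    (hsymm : ∀ i j, f (i, j) = f (j, i)) (hd : ∀ i, f (i, i) = 0)
    (X Y : Finset (Fin n)) :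
    ∑ i ∈ X, ∑ j ∈ Y, f (i, j)
      = ∑ e : {e : Fin n × Fin n // e.1 < e.2},
          (((if (e : Fin n × Fin n).1 ∈ X ∧ (e : Fin n × Fin n).2 ∈ Y then (1:ℝ) else 0)
            + (if (e : Fin n × Fin n).2 ∈ X ∧ (e : Fin n × Fin n).1 ∈ Y then (1:ℝ) else 0))) * f e := by
  classical
  have h1 : ∑ i ∈ X, ∑ j ∈ Y, f (i, j) = ∑ q ∈ X ×ˢ Y, f q := by
    rw [Finset.sum_product' X Y (fun i j => f (i, j))]
  -- RHS as a filtered sum over all pairs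
  have h2 : ∑ e : {e : Fin n × Fin n // e.1 < e.2},
          (((if (e : Fin n × Fin n).1 ∈ X ∧ (e : Fin n × Fin n).2 ∈ Y then (1:ℝ) else 0)
            + (if (e : Fin n × Fin n).2 ∈ X ∧ (e : Fin n × Fin n).1 ∈ Y then (1:ℝ) else 0))) * f e
      = ∑ q ∈ Finset.univ.filter (fun q : Fin n × Fin n => q.1 < q.2),
          (((if q.1 ∈ X ∧ q.2 ∈ Y then (1:ℝ) else 0)
            + (if q.2 ∈ X ∧ q.1 ∈ Y then (1:ℝ) else 0))) * f q := by
    rw [Finset.sum_subtype (p := fun q : Fin n × Fin n => q.1 < q.2) _ (fun q : Fin n × Fin n => by simp) (fun q : Fin n × Fin n =>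
      (((if q.1 ∈ X ∧ q.2 ∈ Y then (1:ℝ) else 0)
            + (if q.2 ∈ X ∧ q.1 ∈ Y then (1:ℝ) else 0))) * f q)]
  rw [h1, h2]
  have hsplit : ∀ q ∈ Finset.univ.filter (fun q : Fin n × Fin n => q.1 < q.2),
      (((if q.1 ∈ X ∧ q.2 ∈ Y then (1:ℝ) else 0)
            + (if q.2 ∈ X ∧ q.1 ∈ Y then (1:ℝ) else 0))) * f q
      = (if q.1 ∈ X ∧ q.2 ∈ Y then f q else 0) + (if q.2 ∈ X ∧ q.1 ∈ Y then f q else 0) := by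
    intro q _; split <;> split <;> ring
  rw [Finset.sum_congr rfl hsplit, Finset.sum_add_distrib]
  have e1 : ∑ q ∈ Finset.univ.filter (fun q : Fin n × Fin n => q.1 < q.2),
      (if q.1 ∈ X ∧ q.2 ∈ Y then f q else 0)
      = ∑ q ∈ (X ×ˢ Y).filter (fun q => q.1 < q.2), f q := by
    rw [← Finset.sum_filter]
    congr 1
    ext q
    simp [Finset.mem_filter, Finset.mem_product, and_comm]
  have e2 : ∑ q ∈ Finset.univ.filter (fun q : Fin n × Fin n => q.1 < q.2),
      (if q.2 ∈ X ∧ q.1 ∈ Y then f q else 0)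
      = ∑ q ∈ (X ×ˢ Y).filter (fun q => q.2 < q.1), f q := by
    rw [← Finset.sum_filter]
    apply Finset.sum_nbij' (fun q => Prod.swap q) (fun q => Prod.swap q)
    · intro q hq
      simp only [Finset.mem_filter, Finset.mem_univ, Finset.mem_product, Prod.fst_swap,
        Prod.snd_swap, true_and] at hq ⊢
      tauto
    · intro q hq
      simp only [Finset.mem_filter, Finset.mem_univ, Finset.mem_product, Prod.fst_swap,
        Prod.snd_swap, true_and] at hq ⊢
      tauto
    · intro q _; simp
    · intro q _; simp
    · intro q _; exact (hsymm q.2 q.1).symm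
  rw [e1, e2]
  have := Finset.sum_filter_add_sum_filter_not (X ×ˢ Y) (fun q => q.1 < q.2) f
  rw [← this]
  congr 1
  have : (X ×ˢ Y).filter (fun q => ¬ q.1 < q.2)
      = (X ×ˢ Y).filter (fun q => q.2 < q.1) ∪ (X ×ˢ Y).filter (fun q => q.1 = q.2) := by
    ext q
    simp only [Finset.mem_filter, Finset.mem_union]
    constructor
    · rintro ⟨hm, hlt⟩
      rcases lt_or_eq_of_le (le_of_not_gt hlt) with h | h
      · exact Or.inl ⟨hm, h⟩
      · exact Or.inr ⟨hm, h.symm⟩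
    · rintro (⟨hm, h⟩ | ⟨hm, h⟩)
      · exact ⟨hm, asymm h⟩
      · exact ⟨hm, by simp [h]⟩
  rw [this, Finset.sum_union]
  · have : ∑ q ∈ (X ×ˢ Y).filter (fun q => q.1 = q.2), f q = 0 := by
      apply Finset.sum_eq_zero
      intro q hq
      simp only [Finset.mem_filter] at hq
      rw [show f q = f (q.1, q.2) from rfl, ← hq.2]
      exact hd _
    rw [this, add_zero]
  · rw [Finset.disjoint_filter]
    intro q _ h h2
    rw [h2] at h; exact lt_irrefl _ h


lemma exp_sub_one_le {x : ℝ} (hx : 0 ≤ x) : Real.exp x - 1 ≤ x * Real.exp x := by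
  have h1 : -x + 1 ≤ Real.exp (-x) := Real.add_one_le_exp (-x)
  have h2 : Real.exp x * Real.exp (-x) = 1 := by
    rw [← Real.exp_add]; simp
  nlinarith [Real.exp_pos x]

lemma bern_mgf {Ωn : Type} [MeasureSpace Ωn] [IsProbabilityMeasure (ℙ : Measure Ωn)]
    (B : Ωn → ℝ) (hB : Measurable B) (h01 : ∀ ω, B ω = 0 ∨ B ω = 1)
    (p : ℝ) (hp : (ℙ {ω | B ω = 1}).toReal = p) (hp0 : 0 ≤ p)
    (c t : ℝ) (hc0 : 0 ≤ c) (hc2 : c ≤ 2) (ht : 0 ≤ t) :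
    mgf (fun ω => c * B ω) ℙ t ≤ Real.exp (p * t * c * Real.exp (2*t)) := by
  have hBint : Integrable B ℙ := by
    apply Integrable.mono' (integrable_const (1:ℝ)) hB.aestronglyMeasurable
    filter_upwards with ω
    rcases h01 ω with h | h <;> simp [h]
  have key : (fun ω => Real.exp (t * (c * B ω)))
      = fun ω => 1 + (Real.exp (t*c) - 1) * B ω := by
    funext ω
    rcases h01 ω with h | h
    · simp [h]
    · rw [h]; ring_nf
  have hind : B = Set.indicator {ω | B ω = 1} (fun _ => (1:ℝ)) := by
    funext ω
    rcases h01 ω with h | h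
    · rw [h, eq_comm, Set.indicator_apply_eq_zero]
      intro hmem
      simp only [Set.mem_setOf_eq] at hmem
      rw [h] at hmem; norm_num at hmem
    · rw [h, Set.indicator_of_mem (by simp [h] : ω ∈ {ω | B ω = 1})]
  have hms : MeasurableSet {ω | B ω = 1} := hB (measurableSet_singleton (1:ℝ))
  have hint : ∫ ω, B ω ∂ℙ = p := by
    conv_lhs => rw [hind]
    rw [MeasureTheory.integral_indicator_const (1:ℝ) hms]
    simp [hp]
    exact hp
  have hmgf : mgf (fun ω => c * B ω) ℙ t = 1 + (Real.exp (t*c) - 1) * p := by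
    rw [mgf]
    show ∫ ω, Real.exp (t * (c * B ω)) ∂ℙ = _
    rw [key, integral_add (integrable_const 1) (hBint.const_mul _),
      MeasureTheory.integral_const_mul, hint, integral_const]
    simp
  rw [hmgf]
  have htc : t * c ≤ 2 * t := by nlinarith
  have h1 : Real.exp (t*c) ≤ Real.exp (2*t) := Real.exp_le_exp.2 htc
  have h2 : Real.exp (t*c) - 1 ≤ (t*c) * Real.exp (2*t) := by
    refine le_trans (exp_sub_one_le (by positivity)) ?_
    exact mul_le_mul_of_nonneg_left h1 (by positivity)
  have h3 : (Real.exp (t*c) - 1) * p ≤ p * t * c * Real.exp (2*t) := by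
    have := mul_le_mul_of_nonneg_right h2 hp0
    nlinarith
  calc 1 + (Real.exp (t*c) - 1) * p ≤ Real.exp ((Real.exp (t*c) - 1) * p) := by
        linarith [Real.add_one_le_exp ((Real.exp (t*c) - 1) * p)]
    _ ≤ _ := Real.exp_le_exp.2 h3

lemma coeff_sum_le {n : ℕ} (X Y : Finset (Fin n)) :
    ∑ e : {e : Fin n × Fin n // e.1 < e.2},
          (((if (e : Fin n × Fin n).1 ∈ X ∧ (e : Fin n × Fin n).2 ∈ Y then (1:ℝ) else 0)
            + (if (e : Fin n × Fin n).2 ∈ X ∧ (e : Fin n × Fin n).1 ∈ Y then (1:ℝ) else 0)))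
      ≤ (X.card : ℝ) * Y.card := by
  classical
  have h := pair_sum_eq (fun q => if q.1 = q.2 then 0 else 1)
    (fun i j => by by_cases h : i = j <;> simp [h, eq_comm])
    (fun i => by simp) X Y
  have h2 : ∑ e : {e : Fin n × Fin n // e.1 < e.2},
          (((if (e : Fin n × Fin n).1 ∈ X ∧ (e : Fin n × Fin n).2 ∈ Y then (1:ℝ) else 0)
            + (if (e : Fin n × Fin n).2 ∈ X ∧ (e : Fin n × Fin n).1 ∈ Y then (1:ℝ) else 0)))
      = ∑ i ∈ X, ∑ j ∈ Y, (if i = j then (0:ℝ) else 1) := by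
    rw [h]
    apply Finset.sum_congr rfl
    intro e _
    have : (e : Fin n × Fin n).1 ≠ (e : Fin n × Fin n).2 := ne_of_lt e.2
    simp [this]
  rw [h2]
  calc ∑ i ∈ X, ∑ j ∈ Y, (if i = j then (0:ℝ) else 1)
      ≤ ∑ i ∈ X, ∑ j ∈ Y, (1:ℝ) := by
        apply Finset.sum_le_sum; intro i _
        apply Finset.sum_le_sum; intro j _
        split <;> norm_num
    _ = (X.card : ℝ) * Y.card := by simp [mul_comm]

lemma pair_tail {n : ℕ} {Ωn : Type} [MeasureSpace Ωn] [IsProbabilityMeasure (ℙ : Measure Ωn)]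
    (A : Ωn → Fin n → Fin n → ℝ)
    (hsym : ∀ ω i j, A ω i j = A ω j i)
    (hdiag : ∀ ω i, A ω i i = 0)
    (h01 : ∀ ω i j, A ω i j = 0 ∨ A ω i j = 1)
    (hmeas : ∀ i j, Measurable (fun ω => A ω i j))
    (p : ℝ) (hp0 : 0 < p) (hp1 : p < 1)
    (hedge : ∀ (i j : Fin n), i ≠ j → (ℙ {ω | A ω i j = 1}).toReal = p)
    (hindep : iIndepFun
      (fun (e : {e : Fin n × Fin n // e.1 < e.2}) ω => A ω e.1.1 e.1.2) ℙ)
    (α t : ℝ) (ht : 0 < t) (hαt : Real.exp (2*t) < α)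
    (X Y : Finset (Fin n)) :
    (ℙ {ω | α * p < (∑ i ∈ X, ∑ j ∈ Y, A ω i j) / ((X.card : ℝ) * (Y.card : ℝ))}).toReal
      ≤ Real.exp (-(p * t * (α - Real.exp (2*t))) * ((X.card:ℝ) * Y.card)) := by
  classical
  have hα0 : 0 < α := lt_trans (Real.exp_pos _) hαt
  by_cases hxy : (X.card : ℝ) * (Y.card : ℝ) = 0
  · have : {ω : Ωn | α * p < (∑ i ∈ X, ∑ j ∈ Y, A ω i j) / ((X.card : ℝ) * (Y.card : ℝ))} = ∅ := by
      ext ω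
      simp only [Set.mem_setOf_eq, Set.mem_empty_iff_false, iff_false, not_lt, hxy, div_zero]
      positivity
    rw [this]
    simp [Real.exp_nonneg]
  have hxypos : 0 < (X.card : ℝ) * (Y.card : ℝ) := by
    rcases Nat.eq_zero_or_pos X.card with h | h
    · exact absurd (by simp [h]) hxy
    rcases Nat.eq_zero_or_pos Y.card with h' | h'
    · exact absurd (by simp [h']) hxy
    positivity
  -- coefficients
  set c : {e : Fin n × Fin n // e.1 < e.2} → ℝ := fun e =>
    ((if (e : Fin n × Fin n).1 ∈ X ∧ (e : Fin n × Fin n).2 ∈ Y then (1:ℝ) else 0)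
      + (if (e : Fin n × Fin n).2 ∈ X ∧ (e : Fin n × Fin n).1 ∈ Y then (1:ℝ) else 0)) with hc
  have hc0 : ∀ e, 0 ≤ c e := by intro e; rw [hc]; dsimp only; split <;> split <;> norm_num
  have hc2 : ∀ e, c e ≤ 2 := by intro e; rw [hc]; dsimp only; split <;> split <;> norm_num
  set Z : {e : Fin n × Fin n // e.1 < e.2} → Ωn → ℝ :=
    fun e => (fun x => c e * x) ∘ (fun ω => A ω (e : Fin n × Fin n).1 (e : Fin n × Fin n).2) with hZ
  have hZmeas : ∀ e, Measurable (Z e) := fun e => (hmeas _ _).const_mul _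
  have hZindep : iIndepFun Z ℙ :=
    hindep.comp (fun e x => c e * x) (fun e => (measurable_id.const_mul _))
  have hSsum : ∀ ω, ∑ i ∈ X, ∑ j ∈ Y, A ω i j = (∑ e, Z e) ω := by
    intro ω
    rw [Finset.sum_apply]
    exact pair_sum_eq (fun q => A ω q.1 q.2) (fun i j => hsym ω i j) (fun i => hdiag ω i) X Y
  -- event inclusion
  have hsub : {ω : Ωn | α * p < (∑ i ∈ X, ∑ j ∈ Y, A ω i j) / ((X.card : ℝ) * (Y.card : ℝ))}
      ⊆ {ω : Ωn | α * p * ((X.card:ℝ) * Y.card) ≤ (∑ e, Z e) ω} := by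
    intro ω hω
    simp only [Set.mem_setOf_eq] at hω ⊢
    rw [← hSsum ω]
    have := (lt_div_iff₀ hxypos).mp hω
    linarith
  -- integrability of exp (t * sum)
  have hZbd : ∀ e ω, 0 ≤ Z e ω ∧ Z e ω ≤ 2 := by
    intro e ω
    rw [hZ]
    simp only [Function.comp_apply]
    rcases h01 ω (e : Fin n × Fin n).1 (e : Fin n × Fin n).2 with h | h <;>
      rw [h] <;> constructor <;> nlinarith [hc0 e, hc2 e]
  have hsum_meas : Measurable (∑ e, Z e) := by
    have : (∑ e, Z e) = fun ω => ∑ e, Z e ω := by funext ω; rw [Finset.sum_apply]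
    rw [this]
    exact Finset.measurable_sum _ (fun e _ => hZmeas e)
  set M : ℝ := 2 * (Fintype.card {e : Fin n × Fin n // e.1 < e.2}) with hM
  have hsum_bd : ∀ ω, (∑ e, Z e) ω ≤ M := by
    intro ω
    rw [Finset.sum_apply, hM]
    calc ∑ e, Z e ω ≤ ∑ _e : {e : Fin n × Fin n // e.1 < e.2}, (2:ℝ) :=
          Finset.sum_le_sum (fun e _ => (hZbd e ω).2)
      _ = _ := by simp [mul_comm]
  have hInt : Integrable (fun ω => Real.exp (t * (∑ e, Z e) ω)) ℙ := by
    apply Integrable.mono' (integrable_const (Real.exp (t * M)))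
      (((hsum_meas.const_mul t).exp).aestronglyMeasurable)
    filter_upwards with ω
    rw [Real.norm_eq_abs, abs_of_pos (Real.exp_pos _)]
    exact Real.exp_le_exp.2 (mul_le_mul_of_nonneg_left (hsum_bd ω) ht.le)
  -- Chernoff
  have hchern := measure_ge_le_exp_mul_mgf (X := ∑ e, Z e) (μ := ℙ)
    (α * p * ((X.card:ℝ) * Y.card)) ht.le hInt
  have hmono : (ℙ {ω : Ωn | α * p < (∑ i ∈ X, ∑ j ∈ Y, A ω i j) / ((X.card : ℝ) * (Y.card : ℝ))}).toReal
      ≤ (ℙ {ω : Ωn | α * p * ((X.card:ℝ) * Y.card) ≤ (∑ e, Z e) ω}).toReal :=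
    ENNReal.toReal_mono (measure_ne_top _ _) (measure_mono hsub)
  -- mgf bound
  have hmgf : mgf (∑ e, Z e) ℙ t = ∏ e, mgf (Z e) ℙ t := hZindep.mgf_sum hZmeas Finset.univ
  have hmgf_le : mgf (∑ e, Z e) ℙ t ≤ Real.exp (p * t * Real.exp (2*t) * ((X.card:ℝ) * Y.card)) := by
    rw [hmgf]
    calc ∏ e, mgf (Z e) ℙ t ≤ ∏ e, Real.exp (p * t * c e * Real.exp (2*t)) := by
          apply Finset.prod_le_prod (fun e _ => mgf_nonneg)
          intro e _
          exact bern_mgf _ (hmeas _ _) (fun ω => h01 ω _ _) p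
            (hedge _ _ (ne_of_lt e.2)) hp0.le (c e) t (hc0 e) (hc2 e) ht.le
      _ = Real.exp (∑ e, p * t * c e * Real.exp (2*t)) := by rw [Real.exp_sum]
      _ ≤ Real.exp (p * t * Real.exp (2*t) * ((X.card:ℝ) * Y.card)) := by
          apply Real.exp_le_exp.2
          have : ∑ e, p * t * c e * Real.exp (2*t)
              = (p * t * Real.exp (2*t)) * ∑ e, c e := by
            rw [Finset.mul_sum]; apply Finset.sum_congr rfl; intro e _; ring
          rw [this]
          apply mul_le_mul_of_nonneg_left _ (by positivity)
          exact coeff_sum_le X Y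
  calc (ℙ {ω : Ωn | α * p < (∑ i ∈ X, ∑ j ∈ Y, A ω i j) / ((X.card : ℝ) * (Y.card : ℝ))}).toReal
      ≤ (ℙ {ω : Ωn | α * p * ((X.card:ℝ) * Y.card) ≤ (∑ e, Z e) ω}).toReal := hmono
    _ ≤ Real.exp (-t * (α * p * ((X.card:ℝ) * Y.card))) * mgf (∑ e, Z e) ℙ t := hchern
    _ ≤ Real.exp (-t * (α * p * ((X.card:ℝ) * Y.card)))
          * Real.exp (p * t * Real.exp (2*t) * ((X.card:ℝ) * Y.card)) := by
        exact mul_le_mul_of_nonneg_left hmgf_le (Real.exp_nonneg _)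
    _ = Real.exp (-(p * t * (α - Real.exp (2*t))) * ((X.card:ℝ) * Y.card)) := by
        rw [← Real.exp_add]; congr 1; ring

/-- In `G(n,p)` with constant `p ∈ (0,1)` and constant `α > 1`, there is a constant
`β = β(p,α)` so that with probability tending to `1`, every pair of clusters `X, Y`
with `|X|, |Y| > β log n` has bipartite density at most `α p`. -/
theorem bidensity_whp
    (p : ℝ) (hp0 : 0 < p) (hp1 : p < 1) (α : ℝ) (hα : 1 < α)
    (Ω : ℕ → Type) (inst : ∀ n, MeasureSpace (Ω n))
    (hprob : ∀ n, IsProbabilityMeasure (ℙ : Measure (Ω n)))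
    (A : ∀ n, Ω n → Fin n → Fin n → ℝ)
    (hsym : ∀ n ω i j, A n ω i j = A n ω j i)
    (hdiag : ∀ n ω i, A n ω i i = 0)
    (h01 : ∀ n ω i j, A n ω i j = 0 ∨ A n ω i j = 1)
    (hmeas : ∀ n i j, Measurable (fun ω => A n ω i j))
    (hedge : ∀ n (i j : Fin n), i ≠ j → (ℙ {ω | A n ω i j = 1}).toReal = p)
    (hindep : ∀ n, iIndepFun
      (fun (e : {e : Fin n × Fin n // e.1 < e.2}) ω => A n ω e.1.1 e.1.2) ℙ) :
    ∃ β : ℝ, 0 < β ∧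
      Tendsto (fun n => (ℙ {ω : Ω n | ∀ X Y : Finset (Fin n),
          β * Real.log n < X.card → β * Real.log n < Y.card →
          (∑ i ∈ X, ∑ j ∈ Y, A n ω i j) / (X.card * Y.card) ≤ α * p}).toReal)
        atTop (nhds 1) := by
  classical
  set t : ℝ := Real.log ((1+α)/2) / 2 with htdef
  have hmid : (1:ℝ) < (1+α)/2 := by linarith
  have ht : 0 < t := div_pos (Real.log_pos hmid) two_pos
  have h2t : Real.exp (2*t) = (1+α)/2 := by
    rw [show 2*t = Real.log ((1+α)/2) by rw [htdef]; ring]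
    exact Real.exp_log (by linarith)
  have hαt : Real.exp (2*t) < α := by rw [h2t]; linarith
  set C : ℝ := p * t * (α - Real.exp (2*t)) with hCdef
  have hC : 0 < C := by
    apply mul_pos (mul_pos hp0 ht); rw [h2t]; linarith
  refine ⟨6 / C, by positivity, ?_⟩
  set β : ℝ := 6 / C with hβdef
  set G : ∀ n : ℕ, Set (Ω n) := fun n => {ω : Ω n | ∀ X Y : Finset (Fin n),
      β * Real.log n < X.card → β * Real.log n < Y.card →
      (∑ i ∈ X, ∑ j ∈ Y, A n ω i j) / (X.card * Y.card) ≤ α * p} with hGdef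
  -- measurability
  have hSm : ∀ (n : ℕ) (X Y : Finset (Fin n)),
      Measurable (fun ω => (∑ i ∈ X, ∑ j ∈ Y, A n ω i j) / ((X.card:ℝ) * Y.card)) := by
    intro n X Y
    apply Measurable.div_const
    apply Finset.measurable_sum
    intro i _
    exact Finset.measurable_sum _ (fun j _ => hmeas n i j)
  have hGmeas : ∀ n, MeasurableSet (G n) := by
    intro n
    have hre : G n = ⋂ (X : Finset (Fin n)) (Y : Finset (Fin n)),
        {ω : Ω n | β * Real.log n < X.card → β * Real.log n < Y.card →
          (∑ i ∈ X, ∑ j ∈ Y, A n ω i j) / (X.card * Y.card) ≤ α * p} := by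
      ext ω; simp only [hGdef, Set.mem_setOf_eq, Set.mem_iInter]
    rw [hre]
    apply MeasurableSet.iInter; intro X
    apply MeasurableSet.iInter; intro Y
    by_cases hX : β * Real.log n < X.card
    · by_cases hY : β * Real.log n < Y.card
      · simpa [hX, hY] using measurableSet_le (hSm n X Y) measurable_const
      · have : {ω : Ω n | β * Real.log n < X.card → β * Real.log n < Y.card →
            (∑ i ∈ X, ∑ j ∈ Y, A n ω i j) / (X.card * Y.card) ≤ α * p} = Set.univ := by
          ext ω; simp [hY]
        rw [this]; exact MeasurableSet.univ
    · have : {ω : Ω n | β * Real.log n < X.card → β * Real.log n < Y.card →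
          (∑ i ∈ X, ∑ j ∈ Y, A n ω i j) / (X.card * Y.card) ≤ α * p} = Set.univ := by
        ext ω; simp [hX]
      rw [this]; exact MeasurableSet.univ
  -- complement
  have hcompl : ∀ n : ℕ, (G n)ᶜ = ⋃ (X : Finset (Fin n)) (Y : Finset (Fin n)),
      {ω : Ω n | (β * Real.log n < X.card ∧ β * Real.log n < Y.card) ∧
        α * p < (∑ i ∈ X, ∑ j ∈ Y, A n ω i j) / ((X.card:ℝ) * Y.card)} := by
    intro n; ext ω
    simp only [hGdef, Set.mem_compl_iff, Set.mem_setOf_eq, Set.mem_iUnion, not_forall, not_le]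
    constructor
    · rintro ⟨X, Y, hX, hY, hlt⟩; exact ⟨X, Y, ⟨hX, hY⟩, hlt⟩
    · rintro ⟨X, Y, ⟨hX, hY⟩, hlt⟩; exact ⟨X, Y, hX, hY, hlt⟩
  have hval : ∀ n : ℕ, (ℙ (G n)).toReal = 1 - (ℙ ((G n)ᶜ)).toReal := by
    intro n
    haveI := hprob n
    have h1 : ℙ (G n) + ℙ ((G n)ᶜ) = 1 := by
      rw [measure_add_measure_compl (hGmeas n)]
      exact measure_univ
    have h2 := congrArg ENNReal.toReal h1
    rw [ENNReal.toReal_add (measure_ne_top _ _) (measure_ne_top _ _)] at h2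
    simp only [ENNReal.toReal_one] at h2
    linarith
  -- tail bound
  have hub : ∀ n : ℕ, 2 ≤ n → (ℙ ((G n)ᶜ)).toReal ≤ 9 / (n:ℝ)^4 := by
    intro n hn
    haveI := hprob n
    have hn0 : (0:ℝ) < n := by exact_mod_cast Nat.lt_of_lt_of_le Nat.zero_lt_two hn
    have hn1 : (1:ℝ) < n := by exact_mod_cast Nat.lt_of_lt_of_le Nat.one_lt_two hn
    have hL : 0 < Real.log n := Real.log_pos hn1
    set L : ℝ := Real.log n with hLdef
    set u : Finset (Fin n) → ℝ := fun X => Real.exp (-((X.card:ℝ) + 2) * L) with hu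
    set E : Finset (Fin n) → Finset (Fin n) → Set (Ω n) := fun X Y =>
      {ω : Ω n | (β * L < X.card ∧ β * L < Y.card) ∧
        α * p < (∑ i ∈ X, ∑ j ∈ Y, A n ω i j) / ((X.card:ℝ) * Y.card)} with hE
    have hpair : ∀ X Y : Finset (Fin n), (ℙ (E X Y)).toReal ≤ u X * u Y := by
      intro X Y
      by_cases hcond : β * L < X.card ∧ β * L < Y.card
      · have hsub : E X Y ⊆ {ω : Ω n |
            α * p < (∑ i ∈ X, ∑ j ∈ Y, A n ω i j) / ((X.card:ℝ) * Y.card)} :=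
          fun ω hω => hω.2
        have h1 : (ℙ (E X Y)).toReal ≤ (ℙ {ω : Ω n |
            α * p < (∑ i ∈ X, ∑ j ∈ Y, A n ω i j) / ((X.card:ℝ) * Y.card)}).toReal :=
          ENNReal.toReal_mono (measure_ne_top _ _) (measure_mono hsub)
        refine le_trans h1 (le_trans (pair_tail (A n) (hsym n) (hdiag n) (h01 n) (hmeas n)
          p hp0 hp1 (hedge n) (hindep n) α t ht hαt X Y) ?_)
        rw [hu]
        dsimp only
        rw [← Real.exp_add, ← hCdef]
        apply Real.exp_le_exp.2
        set x : ℝ := (X.card : ℝ) with hx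
        set y : ℝ := (Y.card : ℝ) with hy
        have hβL : 0 < β * L := by positivity
        have hx1 : 1 ≤ x := by
          have h0 : (0:ℝ) < x := lt_trans hβL hcond.1
          rw [hx] at h0 ⊢
          exact_mod_cast Nat.succ_le_of_lt (by exact_mod_cast h0)
        have hy1 : 1 ≤ y := by
          have h0 : (0:ℝ) < y := lt_trans hβL hcond.2
          rw [hy] at h0 ⊢
          exact_mod_cast Nat.succ_le_of_lt (by exact_mod_cast h0)
        have hc3x : 3 * L < C/2 * x := by
          have h1 : C/2 * (β * L) < C/2 * x := by
            apply mul_lt_mul_of_pos_left hcond.1 (by positivity)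
          have h2 : C/2 * (β * L) = 3 * L := by
            rw [hβdef]; field_simp; ring
          linarith
        have hc3y : 3 * L < C/2 * y := by
          have h1 : C/2 * (β * L) < C/2 * y := by
            apply mul_lt_mul_of_pos_left hcond.2 (by positivity)
          have h2 : C/2 * (β * L) = 3 * L := by
            rw [hβdef]; field_simp; ring
          linarith
        nlinarith [hc3x, hc3y, hx1, hy1, hL, mul_le_mul_of_nonneg_right hc3x.le (by linarith : (0:ℝ) ≤ y),
          mul_le_mul_of_nonneg_right hc3y.le (by linarith : (0:ℝ) ≤ x)]
      · have : E X Y = ∅ := by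
          ext ω; rw [hE]; simp only [Set.mem_setOf_eq, Set.mem_empty_iff_false, iff_false]
          intro h; exact hcond h.1
        rw [this]
        simp only [measure_empty, ENNReal.toReal_zero]
        positivity
    -- union bound
    have hunion : (ℙ ((G n)ᶜ)).toReal
        ≤ ∑ X : Finset (Fin n), ∑ Y : Finset (Fin n), (ℙ (E X Y)).toReal := by
      have h1 : ℙ ((G n)ᶜ) ≤ ∑ X : Finset (Fin n), ∑ Y : Finset (Fin n), ℙ (E X Y) := by
        rw [hcompl n]
        refine le_trans (measure_iUnion_fintype_le _ _) ?_
        exact Finset.sum_le_sum (fun X _ => measure_iUnion_fintype_le _ _)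
      have hne : (∑ X : Finset (Fin n), ∑ Y : Finset (Fin n), ℙ (E X Y)) ≠ ⊤ := by
        refine ENNReal.sum_ne_top.2 (fun X _ => ENNReal.sum_ne_top.2 (fun Y _ => measure_ne_top _ _))
      refine le_trans (ENNReal.toReal_mono hne h1) ?_
      rw [ENNReal.toReal_sum (fun X _ => ENNReal.sum_ne_top.2 (fun Y _ => measure_ne_top _ _))]
      refine Finset.sum_le_sum (fun X _ => ?_)
      rw [ENNReal.toReal_sum (fun Y _ => measure_ne_top _ _)]
    have hsumu : ∑ X : Finset (Fin n), u X ≤ 3 * ((n:ℝ)⁻¹)^2 := by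
      have hr : Real.exp (-L) = (n:ℝ)⁻¹ := by
        rw [hLdef, Real.exp_neg, Real.exp_log hn0]
      have hform : ∀ X : Finset (Fin n), u X = ((n:ℝ)⁻¹)^(X.card + 2) := by
        intro X
        rw [hu]
        dsimp only
        rw [show (-((X.card:ℝ) + 2) * L) = ((X.card + 2 : ℕ):ℝ) * (-L) by push_cast; ring,
          Real.exp_nat_mul, hr]
      have hps : ∑ X : Finset (Fin n), ((n:ℝ)⁻¹)^X.card = ((n:ℝ)⁻¹ + 1)^n := by
        have h := Finset.prod_add (fun _ : Fin n => (n:ℝ)⁻¹) (fun _ => (1:ℝ)) Finset.univ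
        simp only [Finset.prod_const, Finset.powerset_univ, one_pow, mul_one,
          Finset.card_univ, Fintype.card_fin] at h
        exact h.symm
      have hexp3 : ((n:ℝ)⁻¹ + 1)^n ≤ 3 := by
        have h1 : (n:ℝ)⁻¹ + 1 ≤ Real.exp ((n:ℝ)⁻¹) := by
          linarith [Real.add_one_le_exp ((n:ℝ)⁻¹)]
        have h2 : ((n:ℝ)⁻¹ + 1)^n ≤ (Real.exp ((n:ℝ)⁻¹))^n :=
          pow_le_pow_left₀ (by positivity) h1 n
        have h3 : (Real.exp ((n:ℝ)⁻¹))^n = Real.exp 1 := by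
          rw [← Real.exp_nat_mul, mul_inv_cancel₀ (by positivity : (n:ℝ) ≠ 0)]
        rw [h3] at h2
        linarith [Real.exp_one_lt_d9]
      calc ∑ X : Finset (Fin n), u X = ∑ X : Finset (Fin n), ((n:ℝ)⁻¹)^(X.card + 2) := by
            exact Finset.sum_congr rfl (fun X _ => hform X)
        _ = ((n:ℝ)⁻¹)^2 * ∑ X : Finset (Fin n), ((n:ℝ)⁻¹)^X.card := by
            rw [Finset.mul_sum]
            exact Finset.sum_congr rfl (fun X _ => by rw [pow_add]; ring)
        _ = ((n:ℝ)⁻¹)^2 * ((n:ℝ)⁻¹ + 1)^n := by rw [hps]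
        _ ≤ 3 * ((n:ℝ)⁻¹)^2 := by nlinarith [hexp3, sq_nonneg ((n:ℝ)⁻¹)]
    have hu0 : (0:ℝ) ≤ ∑ X : Finset (Fin n), u X :=
      Finset.sum_nonneg (fun X _ => by rw [hu]; positivity)
    calc (ℙ ((G n)ᶜ)).toReal
        ≤ ∑ X : Finset (Fin n), ∑ Y : Finset (Fin n), (ℙ (E X Y)).toReal := hunion
      _ ≤ ∑ X : Finset (Fin n), ∑ Y : Finset (Fin n), u X * u Y := by
          refine Finset.sum_le_sum (fun X _ => Finset.sum_le_sum (fun Y _ => hpair X Y))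
      _ = (∑ X : Finset (Fin n), u X) * (∑ Y : Finset (Fin n), u Y) := by
          rw [Finset.sum_mul_sum]
      _ ≤ (3 * ((n:ℝ)⁻¹)^2) * (3 * ((n:ℝ)⁻¹)^2) := by
          exact mul_le_mul hsumu hsumu hu0 (by positivity)
      _ = 9 / (n:ℝ)^4 := by field_simp; ring
  -- limit
  have htail : Tendsto (fun n : ℕ => 9 / (n:ℝ)^4) atTop (nhds 0) :=
    Tendsto.div_atTop tendsto_const_nhds
      ((tendsto_pow_atTop (by norm_num : (4:ℕ) ≠ 0)).comp tendsto_natCast_atTop_atTop)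
  have hlim : Tendsto (fun n : ℕ => (ℙ ((G n)ᶜ)).toReal) atTop (nhds 0) := by
    apply tendsto_of_tendsto_of_tendsto_of_le_of_le' tendsto_const_nhds htail
    · filter_upwards with n using ENNReal.toReal_nonneg
    · filter_upwards [eventually_ge_atTop 2] with n hn using hub n hn
  have hfun : (fun n : ℕ => (ℙ (G n)).toReal) = fun n => 1 - (ℙ ((G n)ᶜ)).toReal :=
    funext hval
  show Tendsto (fun n : ℕ => (ℙ (G n)).toReal) atTop (nhds 1)
  rw [hfun]
  simpa using tendsto_const_nhds.sub hlim
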